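/- Let G be a finite group and F ≤ K ≤ G subgroups. Then φ⁻¹(K,G) = Σ_{H : F ≤ H ≤ G, ⟨H ∪ K⟩ = G} φ⁻¹(F,H)·[G:H], where φ⁻¹ is the convolution inverse of the lattice totient function φ = i∗μ in the incidence algebra of the subgroup lattice of G, and ⟨H ∪ K⟩ denotes the join (subgroup generated by H and K). -/

import Mathlib

open scoped Classical

noncomputable instance subgroupFintype (G : Type*) [Group G] [Finite G] :
    Fintype (Subgroup G) := Fintype.ofFinite _

noncomputable instance subgroupLFO (G : Type*) [Group G] [Finite G] :
    LocallyFiniteOrder (Subgroup G) := Fintype.toLocallyFiniteOrder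

/-- The Möbius function of the subgroup lattice of a finite group. -/
noncomputable def muSub (G : Type*) [Group G] [Finite G] :
    Subgroup G → Subgroup G → ℤ :=
  fun H K => IncidenceAlgebra.mu ℤ H K

/-- `φ⁻¹(H,L) = ∑_{H ≤ K ≤ L} [L:K] · μ_G(K,L)`, the convolution inverse of the
lattice totient function. -/
noncomputable def phiInv (G : Type*) [Group G] [Fintype G] (H L : Subgroup G) : ℤ :=
  ∑ K ∈ Finset.univ.filter (fun K : Subgroup G => H ≤ K ∧ K ≤ L),
    (K.relIndex L : ℤ) * muSub G K L

lemma filter_eq_Icc (G : Type*) [Group G] [Fintype G] (a b : Subgroup G) :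
    Finset.univ.filter (fun x : Subgroup G => a ≤ x ∧ x ≤ b) = Finset.Icc a b := by
  ext x; simp [Finset.mem_Icc]

/-- Key lemma: `∑_{F ≤ H ≤ L} φ⁻¹(F,H)·[L:H] = 1`. -/
lemma sum_phiInv_relindex (G : Type*) [Group G] [Fintype G] (F L : Subgroup G)
    (hFL : F ≤ L) :
    ∑ H ∈ Finset.Icc F L, phiInv G F H * (H.relIndex L : ℤ) = 1 := by
  have step1 :
      ∑ H ∈ Finset.Icc F L, phiInv G F H * (H.relIndex L : ℤ) =
      ∑ H ∈ Finset.Icc F L, ∑ J ∈ Finset.Icc F H,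
        (J.relIndex H : ℤ) * muSub G J H * (H.relIndex L : ℤ) := by
    refine Finset.sum_congr rfl fun H _ => ?_
    rw [phiInv, filter_eq_Icc, Finset.sum_mul]
  rw [step1]
  rw [Finset.sum_comm' (t' := Finset.Icc F L) (s' := fun J => Finset.Icc J L)
    (fun H J => by
      simp only [Finset.mem_Icc]
      constructor
      · rintro ⟨⟨h1, h2⟩, h3, h4⟩; exact ⟨⟨h4, h2⟩, h3, h4.trans h2⟩
      · rintro ⟨⟨h1, h2⟩, h3, h4⟩; exact ⟨⟨h3.trans h1, h2⟩, h3, h1⟩)]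
  have step2 :
      ∑ J ∈ Finset.Icc F L, ∑ H ∈ Finset.Icc J L,
        (J.relIndex H : ℤ) * muSub G J H * (H.relIndex L : ℤ) =
      ∑ J ∈ Finset.Icc F L, (J.relIndex L : ℤ) * (if J = L then 1 else 0) := by
    refine Finset.sum_congr rfl fun J hJ => ?_
    rw [← IncidenceAlgebra.sum_Icc_mu_right (𝕜 := ℤ) J L, Finset.mul_sum]
    refine Finset.sum_congr rfl fun H hH => ?_
    rw [Finset.mem_Icc] at hH
    have : (J.relIndex H : ℤ) * (H.relIndex L : ℤ) = (J.relIndex L : ℤ) := by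
      rw [← Nat.cast_mul, Subgroup.relIndex_mul_relIndex J H L hH.1 hH.2]
    simp only [muSub]; rw [← this]; ring
  rw [step2]
  simp only [mul_ite, mul_one, mul_zero, Finset.sum_ite_eq' (Finset.Icc F L) L]
  simp [Finset.mem_Icc, hFL, Subgroup.relIndex_self]

/-- For subgroups `F ≤ K ≤ G`:
`φ⁻¹(K,G) = ∑_{F ≤ H ≤ G, ⟨H,K⟩ = G} φ⁻¹(F,H) · [G:H]`. -/
theorem stmt19 (G : Type*) [Group G] [Fintype G] (F K : Subgroup G) (hFK : F ≤ K) :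
    phiInv G K ⊤ =
      ∑ H ∈ Finset.univ.filter (fun H : Subgroup G => F ≤ H ∧ H ⊔ K = ⊤),
        phiInv G F H * (H.index : ℤ) := by
  have hR :
      ∑ H ∈ Finset.univ.filter (fun H : Subgroup G => F ≤ H ∧ H ⊔ K = ⊤),
        phiInv G F H * (H.index : ℤ) =
      ∑ H ∈ Finset.univ.filter (fun H : Subgroup G => F ≤ H),
        ∑ L ∈ Finset.Icc (H ⊔ K) ⊤,
          phiInv G F H * (H.index : ℤ) * muSub G L ⊤ := by
    rw [Finset.sum_filter, Finset.sum_filter]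
    refine Finset.sum_congr rfl fun H _ => ?_
    have : ∑ L ∈ Finset.Icc (H ⊔ K) ⊤,
        phiInv G F H * (H.index : ℤ) * muSub G L ⊤ =
        phiInv G F H * (H.index : ℤ) * (if H ⊔ K = ⊤ then 1 else 0) := by
      rw [← Finset.mul_sum]
      congr 1
      exact IncidenceAlgebra.sum_Icc_mu_left (𝕜 := ℤ) (H ⊔ K) ⊤
    rw [this]
    by_cases h1 : F ≤ H <;> by_cases h2 : H ⊔ K = ⊤ <;> simp [h1, h2]
  rw [hR]
  rw [Finset.sum_comm' (t' := Finset.Icc K ⊤)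
    (s' := fun L => Finset.Icc F L)
    (fun H L => by
      simp only [Finset.mem_filter, Finset.mem_univ, true_and, Finset.mem_Icc,
        sup_le_iff, le_top, and_true]
      tauto)]
  have hInner : ∀ L ∈ Finset.Icc K ⊤,
      ∑ H ∈ Finset.Icc F L, phiInv G F H * (H.index : ℤ) * muSub G L ⊤ =
      (L.index : ℤ) * muSub G L ⊤ := by
    intro L hL
    rw [Finset.mem_Icc] at hL
    have hFL : F ≤ L := hFK.trans hL.1
    have : ∑ H ∈ Finset.Icc F L, phiInv G F H * (H.index : ℤ) * muSub G L ⊤ =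
        ∑ H ∈ Finset.Icc F L,
          (phiInv G F H * (H.relIndex L : ℤ)) * ((L.index : ℤ) * muSub G L ⊤) := by
      refine Finset.sum_congr rfl fun H hH => ?_
      rw [Finset.mem_Icc] at hH
      have : (H.relIndex L : ℤ) * (L.index : ℤ) = (H.index : ℤ) := by
        rw [← Nat.cast_mul, Subgroup.relIndex_mul_index hH.2]
      simp only [muSub]; rw [← this]; ring
    rw [this, ← Finset.sum_mul, sum_phiInv_relindex G F L hFL, one_mul]
  rw [Finset.sum_congr rfl hInner]
  rw [phiInv, filter_eq_Icc]
  refine Finset.sum_congr rfl fun L hL => ?_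
  rw [Subgroup.relIndex_top_right]
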